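/- Let d ≥ 4 be even and let α = (α_0,…,α_{d−1}) ∈ ℂ^d satisfy ⟨α, X^{d/2} Z^i α⟩ = 0 for every i = 0, 1, …, d/2. Then in fact ⟨α, X^{d/2} Z^i α⟩ = 0 for every i = 0, 1, …, d−1, one has α_j · α_{j+d/2 mod d} = 0 for every j ∈ ℤ/dℤ, and consequently at least d/2 of the coordinates of α are zero. -/

import Mathlib

open Complex

/-- `ω d = exp(2πi/d)`, the primitive `d`-th root of unity in `ℂ`. -/
noncomputable def ω (d : ℕ) : ℂ := Complex.exp (2 * Real.pi * Complex.I / d)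

/-- The generalized Pauli operator `U_{m,n} = X^m Z^n` acting on `ℂ^d`
(coordinates indexed by `ZMod d`), where `X e_j = e_{j+1}` and `Z e_j = ω^j e_j`:
`(U_{m,n} α)_k = ω^{n (k-m)} α_{k-m}`. -/
noncomputable def pU (d : ℕ) [NeZero d] (m n : ZMod d) (α : ZMod d → ℂ) : ZMod d → ℂ :=
  fun k => ω d ^ (n.val * (k - m).val) * α (k - m)

/-- The standard Hermitian inner product on `ℂ^d`. -/
noncomputable def ip (d : ℕ) [NeZero d] (α β : ZMod d → ℂ) : ℂ :=
  ∑ j : ZMod d, (starRingEnd ℂ) (α j) * β j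

/-- For even `d ≥ 4`: if `⟨α, X^{d/2} Z^i α⟩ = 0` for `i = 0,…,d/2`, then in
fact `⟨α, X^{d/2} Z^i α⟩ = 0` for all `i = 0,…,d-1`, one has
`α_j α_{j+d/2} = 0` for all `j ∈ ℤ/dℤ`, and at least `d/2` of the coordinates
of `α` vanish. -/
theorem stmt_12 (d : ℕ) [NeZero d] (hd : 4 ≤ d) (heven : Even d) (α : ZMod d → ℂ)
    (h : ∀ i : ℕ, i ≤ d / 2 →
      ip d α (pU d ((d / 2 : ℕ) : ZMod d) (i : ZMod d) α) = 0) :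
    (∀ i : ℕ, i ≤ d - 1 →
        ip d α (pU d ((d / 2 : ℕ) : ZMod d) (i : ZMod d) α) = 0) ∧
      (∀ j : ZMod d, α j * α (j + ((d / 2 : ℕ) : ZMod d)) = 0) ∧
      d / 2 ≤ ({j | α j = 0} : Set (ZMod d)).ncard := by
  classical
  obtain ⟨m, hdm⟩ := heven
  have hm0 : m ≠ 0 := by omega
  have hmd : m < d := by omega
  have hdhalf : d / 2 = m := by omega
  have hd0 : d ≠ 0 := by omega
  rw [hdhalf] at h ⊢
  set ζ := ω d with hζdef
  have hprim : IsPrimitiveRoot ζ d := Complex.isPrimitiveRoot_exp d hd0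
  have hζd : ζ ^ d = 1 := hprim.pow_eq_one
  have hζ0 : ζ ≠ 0 := by
    intro h0
    rw [h0, zero_pow hd0] at hζd
    exact zero_ne_one hζd
  have hζdz : ζ ^ (d : ℤ) = 1 := by rw [zpow_natCast]; exact hζd
  have hzp : ∀ a b : ℤ, (d : ℤ) ∣ (a - b) → ζ ^ a = ζ ^ b := by
    rintro a b ⟨k, hk⟩
    have ha : a = b + d * k := by linarith
    rw [ha, zpow_add₀ hζ0, zpow_mul, hζdz, one_zpow, mul_one]
  have hζm : ζ ^ (m : ℤ) = -1 := by
    have h2 : ζ ^ (m : ℤ) * ζ ^ (m : ℤ) = 1 := by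
      rw [← zpow_add₀ hζ0, ← hζdz]
      congr 1
      push_cast [hdm]; ring
    rcases mul_self_eq_one_iff.mp h2 with h1 | h1
    · exfalso
      have := (hprim.zpow_eq_one_iff_dvd _).mp h1
      rw [Int.natCast_dvd_natCast] at this
      exact absurd (Nat.le_of_dvd (Nat.pos_of_ne_zero hm0) this) (by omega)
    · exact h1
  have habs : ‖ζ‖ = 1 := by
    have : (2 * (Real.pi : ℂ) * I / d) = ((2 * Real.pi / d : ℝ) : ℂ) * I := by
      push_cast; ring
    rw [hζdef, ω, this, Complex.norm_exp_ofReal_mul_I]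
  have hconj : ∀ a : ℤ, (starRingEnd ℂ) (ζ ^ a) = ζ ^ (-a) := by
    intro a
    rw [map_zpow₀, ← Complex.inv_eq_conj habs, inv_zpow, ← zpow_neg]
  set M : ZMod d := (m : ZMod d) with hM
  have hMval : M.val = m := by rw [hM, ZMod.val_natCast, Nat.mod_eq_of_lt hmd]
  have hMM : M + M = (0 : ZMod d) := by
    have h1 : ((m + m : ℕ) : ZMod d) = ((d : ℕ) : ZMod d) := by rw [hdm]
    rw [ZMod.natCast_self] at h1
    push_cast at h1
    exact h1
  set c : ZMod d → ℂ := fun j => (starRingEnd ℂ) (α (j + M)) * α j with hc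
  set S : ℤ → ℂ := fun t => ∑ j : ZMod d, c j * ζ ^ (t * j.val) with hSdef
  have hip : ∀ n : ZMod d, ip d α (pU d M n α)
      = ∑ j : ZMod d, c j * ζ ^ ((n.val : ℤ) * j.val) := by
    intro n
    unfold ip pU
    refine (Fintype.sum_equiv (Equiv.addRight M)
      (fun j => c j * ζ ^ ((n.val : ℤ) * j.val)) _ ?_).symm
    intro j
    simp only [Equiv.coe_addRight, add_sub_cancel_right, hc, hζdef]
    rw [← zpow_natCast (ω d) (n.val * j.val)]
    push_cast
    ring
  have hS : ∀ n : ℕ, ip d α (pU d M (n : ZMod d) α) = S n := by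
    intro n
    rw [hip]
    apply Finset.sum_congr rfl
    intro j _
    congr 1
    apply hzp
    rw [ZMod.val_natCast]
    have h1 : (↑(n % d) : ℤ) = ↑n - ↑d * ↑(n / d) := by
      have := Nat.mod_add_div n d
      omega
    rw [h1]
    exact ⟨-(↑(n / d) * ↑j.val), by ring⟩
  have hcM : ∀ j : ZMod d, c (j + M) = (starRingEnd ℂ) (c j) := by
    intro j
    simp only [hc, map_mul, Complex.conj_conj]
    rw [add_assoc, hMM, add_zero, mul_comm]
  have hsub : ∀ j : ZMod d, (d : ℤ) ∣ (((j - M).val : ℤ) - ((j.val : ℤ) - m)) := by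
    intro j
    rw [← ZMod.intCast_zmod_eq_zero_iff_dvd]
    push_cast [ZMod.natCast_val, ZMod.cast_id]
    ring
  have hsym : ∀ t : ℤ, S ((d : ℤ) - t) = (-1 : ℂ) ^ t * (starRingEnd ℂ) (S t) := by
    intro t
    have hconjS : (starRingEnd ℂ) (S t) = ∑ j : ZMod d, c j * ζ ^ (-(t * ((j - M).val : ℤ))) := by
      rw [hSdef]
      simp only [map_sum, map_mul, hconj]
      refine Fintype.sum_equiv (Equiv.addRight M) _ _ ?_
      intro j
      simp only [Equiv.coe_addRight, add_sub_cancel_right]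
      rw [hcM j]
    rw [hconjS, Finset.mul_sum, hSdef]
    apply Finset.sum_congr rfl
    intro j _
    have hkey : (-1 : ℂ) ^ t * ζ ^ (-(t * ((j - M).val : ℤ)))
        = ζ ^ (((d : ℤ) - t) * j.val) := by
      rw [← hζm, ← zpow_mul, ← zpow_add₀ hζ0]
      apply hzp
      obtain ⟨k, hk⟩ := hsub j
      have hd2 : (d : ℤ) = m + m := by exact_mod_cast hdm
      exact ⟨-(j.val : ℤ) + t - t * k, by linear_combination (-t) * hk + (-t) * hd2⟩
    rw [← hkey]
    ring
  have hSm : ∀ n : ℕ, n ≤ m → S n = 0 := fun n hn => (hS n).symm.trans (h n hn)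
  have hSall : ∀ n : ℕ, n ≤ d - 1 → S n = 0 := by
    intro n hn
    by_cases hnm : n ≤ m
    · exact hSm n hnm
    · have hdn : d - n ≤ m := by omega
      have h1 := hsym ((d : ℤ) - n)
      have e1 : (d : ℤ) - ((d : ℤ) - n) = n := by ring
      have e2 : ((d : ℤ) - n) = ((d - n : ℕ) : ℤ) := by push_cast [Nat.cast_sub (by omega : n ≤ d)]; ring
      rw [e1, e2] at h1
      rw [h1, hSm (d - n) hdn, map_zero, mul_zero]
  have hcz : ∀ a : ZMod d, c a = 0 := by
    intro a
    have key : ∑ n ∈ Finset.range d, S n * ζ ^ (-((n : ℤ) * a.val)) = (d : ℂ) * c a := by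
      have step1 : ∀ n ∈ Finset.range d, S n * ζ ^ (-((n : ℤ) * a.val))
          = ∑ j : ZMod d, c j * (ζ ^ ((j.val : ℤ) - a.val)) ^ n := by
        intro n _
        rw [hSdef, Finset.sum_mul]
        apply Finset.sum_congr rfl
        intro j _
        rw [mul_assoc]
        congr 1
        rw [← zpow_natCast (ζ ^ ((j.val : ℤ) - (a.val : ℤ))) n, ← zpow_mul,
          ← zpow_add₀ hζ0]
        congr 1
        ring
      rw [Finset.sum_congr rfl step1, Finset.sum_comm]
      have step2 : ∀ j : ZMod d,
          ∑ n ∈ Finset.range d, c j * (ζ ^ ((j.val : ℤ) - a.val)) ^ n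
          = if j = a then (d : ℂ) * c a else 0 := by
        intro j
        by_cases hja : j = a
        · subst hja
          rw [if_pos rfl]
          simp only [sub_self, zpow_zero, one_pow, mul_one, Finset.sum_const,
            Finset.card_range, nsmul_eq_mul]
        · have hne : ζ ^ ((j.val : ℤ) - a.val) ≠ 1 := by
            intro hone
            have hdvd := (hprim.zpow_eq_one_iff_dvd _).mp hone
            have hjv : (j.val : ℤ) < d := by exact_mod_cast ZMod.val_lt j
            have hav : (a.val : ℤ) < d := by exact_mod_cast ZMod.val_lt a
            have h0 : ((j.val : ℤ) - a.val) = 0 := by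
              refine Int.eq_zero_of_abs_lt_dvd hdvd ?_
              rw [abs_lt]
              constructor
              · have : (0 : ℤ) ≤ (j.val : ℤ) := Int.natCast_nonneg _
                linarith
              · have : (0 : ℤ) ≤ (a.val : ℤ) := Int.natCast_nonneg _
                linarith
            have : j.val = a.val := by omega
            exact hja (ZMod.val_injective d this)
          have hXd : (ζ ^ ((j.val : ℤ) - a.val)) ^ d = 1 := by
            rw [← zpow_natCast, ← zpow_mul, mul_comm, zpow_mul, hζdz, one_zpow]
          rw [if_neg hja, ← Finset.mul_sum, geom_sum_eq hne, hXd, sub_self, zero_div, mul_zero]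
      rw [Finset.sum_congr rfl (fun j _ => step2 j), Finset.sum_ite_eq' Finset.univ a]
      simp
    have hzero : (d : ℂ) * c a = 0 := by
      rw [← key]
      apply Finset.sum_eq_zero
      intro n hn
      rw [hSall n (by have := Finset.mem_range.mp hn; omega), zero_mul]
    have hdC : (d : ℂ) ≠ 0 := Nat.cast_ne_zero.mpr hd0
    exact (mul_eq_zero.mp hzero).resolve_left hdC
  have hprod : ∀ j : ZMod d, α j * α (j + M) = 0 := by
    intro j
    rcases mul_eq_zero.mp (hcz j) with h1 | h1
    · rw [map_eq_zero] at h1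
      rw [h1, mul_zero]
    · rw [h1, zero_mul]
  refine ⟨?_, hprod, ?_⟩
  · intro i hi
    rw [hS i]
    exact hSall i hi
  · set f : ZMod d → ZMod d := fun j => if α j = 0 then j else j + M with hf
    have hfzero : ∀ j, α (f j) = 0 := by
      intro j
      rw [hf]
      by_cases h1 : α j = 0
      · simp [h1]
      · simp only [h1, if_false]
        rcases mul_eq_zero.mp (hprod j) with h2 | h2
        · exact absurd h2 h1
        · exact h2
    set T : Finset (ZMod d) := Finset.image (fun i : Fin m => ((i : ℕ) : ZMod d)) Finset.univ with hT
    have hTval : ∀ j ∈ T, j.val < m := by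
      intro j hj
      rw [hT, Finset.mem_image] at hj
      obtain ⟨i, _, rfl⟩ := hj
      rw [ZMod.val_natCast_of_lt (lt_trans i.isLt hmd)]
      exact i.isLt
    have hTcard : T.card = m := by
      rw [hT, Finset.card_image_of_injective _ ?_, Finset.card_univ, Fintype.card_fin]
      intro i1 i2 hi
      have := congrArg ZMod.val hi
      rw [ZMod.val_natCast_of_lt (lt_trans i1.isLt hmd),
        ZMod.val_natCast_of_lt (lt_trans i2.isLt hmd)] at this
      exact Fin.ext this
    have hvadd : ∀ j : ZMod d, j.val < m → (j + M).val = j.val + m := by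
      intro j hj
      rw [ZMod.val_add_of_lt (by rw [hMval]; omega), hMval]
    have hinj : Set.InjOn f T := by
      intro x hx y hy hxy
      have hxv := hTval x hx
      have hyv := hTval y hy
      rw [hf] at hxy
      by_cases h1 : α x = 0 <;> by_cases h2 : α y = 0 <;>
        simp only [h1, h2, if_true, if_false] at hxy
      · exact hxy
      · exfalso
        have := congrArg ZMod.val hxy
        rw [hvadd y hyv] at this
        omega
      · exfalso
        have := congrArg ZMod.val hxy
        rw [hvadd x hxv] at this
        omega
      · exact add_right_cancel hxy
    calc m = T.card := hTcard.symm
      _ = (T.image f).card := (Finset.card_image_of_injOn hinj).symm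
      _ = ((T.image f : Finset (ZMod d)) : Set (ZMod d)).ncard := (Set.ncard_coe_finset _).symm
      _ ≤ ({j | α j = 0} : Set (ZMod d)).ncard := by
          apply Set.ncard_le_ncard _ (Set.toFinite _)
          intro x hx
          simp only [Finset.coe_image, Set.mem_image, Finset.mem_coe] at hx
          obtain ⟨j, _, rfl⟩ := hx
          exact hfzero j
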